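/- Let D be a continuous discount function satisfying the extended weak one-switch property. Then for every difference function Δ of D, if there exist 0 ≤ σ₁ < σ₂ with Δ(σ₁) = 0 and Δ(σ₂) = 0, then Δ(σ) = 0 for every σ ≥ 0. -/

import Mathlib

def IsDiscount (D : ℝ → ℝ) : Prop :=
  D 0 = 1 ∧ (∀ t, 0 ≤ t → 0 < D t) ∧ StrictAntiOn D (Set.Ici 0) ∧
    Filter.Tendsto D Filter.atTop (nhds 0)

noncomputable def diffFn {n m : ℕ} (D : ℝ → ℝ) (t : Fin n → ℝ) (s : Fin m → ℝ)
    (v : Fin n → ℝ) (w : Fin m → ℝ) : ℝ → ℝ :=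
  fun σ => (∑ i, D (t i + σ) * v i) - (∑ j, D (s j + σ) * w j)

def DoubleSwitch (Δ : ℝ → ℝ) : Prop :=
  ∃ σ₁ σ₂ σ₃ : ℝ, 0 ≤ σ₁ ∧ σ₁ < σ₂ ∧ σ₂ < σ₃ ∧
    ((0 < Δ σ₁ ∧ Δ σ₂ < 0 ∧ 0 < Δ σ₃) ∨ (Δ σ₁ < 0 ∧ 0 < Δ σ₂ ∧ Δ σ₃ < 0))

def ExtWeakOneSwitch (D : ℝ → ℝ) : Prop :=
  ∀ (n m : ℕ), 0 < n → 0 < m →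
    ∀ (t : Fin n → ℝ) (s : Fin m → ℝ) (v : Fin n → ℝ) (w : Fin m → ℝ),
      StrictMono t → StrictMono s → (∀ i, 0 ≤ t i) → (∀ j, 0 ≤ s j) →
      (∀ i, 0 ≤ v i) → (∀ j, 0 ≤ w j) → ¬ DoubleSwitch (diffFn D t s v w)

noncomputable def comboFn (D : ℝ → ℝ) (A : Finset ℝ) (c : ℝ → ℝ) : ℝ → ℝ :=
  fun x => ∑ τ ∈ A, c τ * D (τ + x)

lemma combo_no_ds (D : ℝ → ℝ) (hW : ExtWeakOneSwitch D) (A : Finset ℝ)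
    (hA : ∀ τ ∈ A, 0 ≤ τ) (c : ℝ → ℝ) : ¬ DoubleSwitch (comboFn D A c) := by
  classical
  set B : Finset ℝ := insert 0 A with hB
  set c' : ℝ → ℝ := fun τ => if τ ∈ A then c τ else 0 with hc'
  have hBnonneg : ∀ τ ∈ B, (0:ℝ) ≤ τ := by
    intro τ hτ
    rcases Finset.mem_insert.1 hτ with h | h
    · simp [h]
    · exact hA τ h
  have hcard : 0 < B.card := Finset.card_pos.2 ⟨0, Finset.mem_insert_self _ _⟩
  set e := B.orderIsoOfFin rfl with he
  set t : Fin B.card → ℝ := fun i => (e i : ℝ) with hT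
  have htmono : StrictMono t := by
    intro i j hij
    exact_mod_cast (e.lt_iff_lt.2 hij)
  have htmem : ∀ i, t i ∈ B := fun i => (e i).2
  set v : Fin B.card → ℝ := fun i => max (c' (t i)) 0 with hv
  set w : Fin B.card → ℝ := fun i => max (-(c' (t i))) 0 with hw
  have hkey : diffFn D t t v w = comboFn D A c := by
    funext x
    have h1 : diffFn D t t v w x = ∑ i, c' (t i) * D (t i + x) := by
      simp only [diffFn, ← Finset.sum_sub_distrib]
      refine Finset.sum_congr rfl (fun i _ => ?_)
      have : v i - w i = c' (t i) := by
        simp only [hv, hw]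
        rcases le_total (c' (t i)) 0 with h | h
        · rw [max_eq_right h, max_eq_left (by linarith)]; ring
        · rw [max_eq_left h, max_eq_right (by linarith)]; ring
      calc D (t i + x) * v i - D (t i + x) * w i = (v i - w i) * D (t i + x) := by ring
        _ = c' (t i) * D (t i + x) := by rw [this]
    rw [h1]
    have h2 : ∑ i, c' (t i) * D (t i + x) = ∑ τ ∈ B, c' τ * D (τ + x) := by
      rw [← Finset.sum_coe_sort B (fun τ => c' τ * D (τ + x))]
      exact Fintype.sum_equiv e.toEquiv _ _ (fun i => rfl)
    rw [h2]
    have h3 : ∑ τ ∈ B, c' τ * D (τ + x) = ∑ τ ∈ A, c' τ * D (τ + x) := by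
      symm
      refine Finset.sum_subset (Finset.subset_insert _ _) (fun τ _ hτ => ?_)
      simp [hc', hτ]
    rw [h3]
    refine Finset.sum_congr rfl (fun τ hτ => by simp [hc', hτ])
  rw [← hkey]
  exact hW _ _ hcard hcard t t v w htmono htmono
    (fun i => hBnonneg _ (htmem i)) (fun i => hBnonneg _ (htmem i))
    (fun i => le_max_right _ _) (fun i => le_max_right _ _)

lemma no_ds_pert (D : ℝ → ℝ) (hW : ExtWeakOneSwitch D) (A : Finset ℝ)
    (hA : ∀ τ ∈ A, 0 ≤ τ) (c : ℝ → ℝ) {u b : ℝ} (hu : 0 ≤ u) (hb : 0 ≤ b) (ε ε' : ℝ) :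
    ¬ DoubleSwitch (fun x => comboFn D A c x + ε * D (u + x) - ε' * D (b + x)) := by
  classical
  set B : Finset ℝ := insert u (insert b A) with hB
  have hBnonneg : ∀ τ ∈ B, (0:ℝ) ≤ τ := by
    intro τ hτ
    rcases Finset.mem_insert.1 hτ with h | h
    · simp [h, hu]
    · rcases Finset.mem_insert.1 h with h | h
      · simp [h, hb]
      · exact hA τ h
  set cG : ℝ → ℝ := fun τ =>
    (if τ ∈ A then c τ else 0) + ((if τ = u then ε else 0) - (if τ = b then ε' else 0)) with hcG
  have hkey : comboFn D B cG = fun x => comboFn D A c x + ε * D (u + x) - ε' * D (b + x) := by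
    funext x
    have hsplit : comboFn D B cG x =
        (∑ τ ∈ B, (if τ ∈ A then c τ else 0) * D (τ + x)) +
        ((∑ τ ∈ B, (if τ = u then ε else 0) * D (τ + x)) -
         (∑ τ ∈ B, (if τ = b then ε' else 0) * D (τ + x))) := by
      simp only [comboFn, hcG]
      rw [← Finset.sum_sub_distrib, ← Finset.sum_add_distrib]
      exact Finset.sum_congr rfl (fun τ _ => by ring)
    rw [hsplit]
    have hAB : A ⊆ B := (Finset.subset_insert _ _).trans (Finset.subset_insert _ _)
    have e1 : (∑ τ ∈ B, (if τ ∈ A then c τ else 0) * D (τ + x)) = comboFn D A c x := by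
      rw [comboFn]
      rw [← Finset.sum_subset hAB (fun τ _ hτ => by simp [hτ])]
      exact Finset.sum_congr rfl (fun τ hτ => by simp [hτ])
    have e2 : (∑ τ ∈ B, (if τ = u then ε else 0) * D (τ + x)) = ε * D (u + x) := by
      rw [Finset.sum_eq_single u (fun τ _ hτ => by simp [hτ]) (fun h => absurd (Finset.mem_insert_self u _) h)]
      simp
    have e3 : (∑ τ ∈ B, (if τ = b then ε' else 0) * D (τ + x)) = ε' * D (b + x) := by
      have hbB : b ∈ B := Finset.mem_insert_of_mem (Finset.mem_insert_self b _)
      rw [Finset.sum_eq_single b (fun τ _ hτ => by simp [hτ]) (fun h => absurd hbB h)]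
      simp
    rw [e1, e2, e3]; ring
  rw [← hkey]
  exact combo_no_ds D hW B hBnonneg cG

lemma diffFn_eq_combo {n m : ℕ} (D : ℝ → ℝ) (t : Fin n → ℝ) (s : Fin m → ℝ)
    (v : Fin n → ℝ) (w : Fin m → ℝ) (ht0 : ∀ i, 0 ≤ t i) (hs0 : ∀ j, 0 ≤ s j) :
    ∃ (A : Finset ℝ) (c : ℝ → ℝ), (∀ τ ∈ A, 0 ≤ τ) ∧ diffFn D t s v w = comboFn D A c := by
  classical
  set A : Finset ℝ := (Finset.univ.image t) ∪ (Finset.univ.image s) with hA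
  set c : ℝ → ℝ := fun τ =>
    (∑ i ∈ Finset.univ.filter (fun i => t i = τ), v i) -
    (∑ j ∈ Finset.univ.filter (fun j => s j = τ), w j) with hc
  refine ⟨A, c, ?_, ?_⟩
  · intro τ hτ
    rcases Finset.mem_union.1 hτ with h | h <;> obtain ⟨i, _, rfl⟩ := Finset.mem_image.1 h
    · exact ht0 i
    · exact hs0 i
  · funext x
    have hsplit : comboFn D A c x =
        (∑ τ ∈ A, ∑ i ∈ Finset.univ.filter (fun i => t i = τ), v i * D (t i + x)) -
        (∑ τ ∈ A, ∑ j ∈ Finset.univ.filter (fun j => s j = τ), w j * D (s j + x)) := by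
      rw [comboFn, ← Finset.sum_sub_distrib]
      refine Finset.sum_congr rfl (fun τ _ => ?_)
      rw [hc]
      have h1 : ∑ i ∈ Finset.univ.filter (fun i => t i = τ), v i * D (t i + x)
          = (∑ i ∈ Finset.univ.filter (fun i => t i = τ), v i) * D (τ + x) := by
        rw [Finset.sum_mul]
        refine Finset.sum_congr rfl (fun i hi => ?_)
        rw [(Finset.mem_filter.1 hi).2]
      have h2 : ∑ j ∈ Finset.univ.filter (fun j => s j = τ), w j * D (s j + x)
          = (∑ j ∈ Finset.univ.filter (fun j => s j = τ), w j) * D (τ + x) := by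
        rw [Finset.sum_mul]
        refine Finset.sum_congr rfl (fun j hj => ?_)
        rw [(Finset.mem_filter.1 hj).2]
      rw [h1, h2]; ring
    rw [hsplit]
    rw [Finset.sum_fiberwise_of_maps_to (fun i _ => Finset.mem_union_left _ (Finset.mem_image_of_mem t (Finset.mem_univ i)))]
    rw [Finset.sum_fiberwise_of_maps_to (fun j _ => Finset.mem_union_right _ (Finset.mem_image_of_mem s (Finset.mem_univ j)))]
    rw [diffFn]
    congr 1 <;> exact Finset.sum_congr rfl (fun i _ => by ring)

lemma middle_zero {D : ℝ → ℝ} (hDpos : ∀ y, 0 ≤ y → 0 < D y) (hW : ExtWeakOneSwitch D)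
    {A : Finset ℝ} (hA : ∀ τ ∈ A, 0 ≤ τ) (c : ℝ → ℝ)
    (z₁ z₂ x : ℝ) (hz : 0 ≤ z₁) (h1 : z₁ < x) (h2 : x < z₂)
    (hF1 : comboFn D A c z₁ = 0) (hF2 : comboFn D A c z₂ = 0) : comboFn D A c x = 0 := by
  by_contra hne
  have hx0 : (0:ℝ) ≤ x := le_of_lt (lt_of_le_of_lt hz h1)
  have hz2 : (0:ℝ) ≤ z₂ := le_of_lt (lt_of_le_of_lt hx0 h2)
  set d : ℝ := D (0 + x) with hd
  have hDx : 0 < d := hDpos _ (by linarith)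
  have hDz1 : 0 < D (0 + z₁) := hDpos _ (by linarith)
  have hDz2 : 0 < D (0 + z₂) := hDpos _ (by linarith)
  rcases lt_or_gt_of_ne hne with hneg | hpos
  · -- F x < 0 : use G = F + ε D, pattern (+,-,+)
    set ε : ℝ := (-(comboFn D A c x)) / (2 * d) with hε
    have hεpos : 0 < ε := div_pos (by linarith) (by linarith)
    have hεd : ε * d = (-(comboFn D A c x)) / 2 := by
      rw [hε]; field_simp
    refine no_ds_pert D hW A hA c (le_refl 0) (le_refl 0) ε 0
      ⟨z₁, x, z₂, hz, h1, h2, Or.inl ⟨?_, ?_, ?_⟩⟩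
    · show 0 < comboFn D A c z₁ + ε * D (0 + z₁) - 0 * D (0 + z₁)
      rw [hF1]; nlinarith
    · show comboFn D A c x + ε * D (0 + x) - 0 * D (0 + x) < 0
      rw [← hd]; nlinarith
    · show 0 < comboFn D A c z₂ + ε * D (0 + z₂) - 0 * D (0 + z₂)
      rw [hF2]; nlinarith
  · set ε : ℝ := (comboFn D A c x) / (2 * d) with hε
    have hεpos : 0 < ε := div_pos (by linarith) (by linarith)
    have hεd : ε * d = (comboFn D A c x) / 2 := by
      rw [hε]; field_simp
    refine no_ds_pert D hW A hA c (le_refl 0) (le_refl 0) 0 ε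
      ⟨z₁, x, z₂, hz, h1, h2, Or.inr ⟨?_, ?_, ?_⟩⟩
    · show comboFn D A c z₁ + 0 * D (0 + z₁) - ε * D (0 + z₁) < 0
      rw [hF1]; nlinarith
    · show 0 < comboFn D A c x + 0 * D (0 + x) - ε * D (0 + x)
      rw [← hd]; nlinarith
    · show comboFn D A c z₂ + 0 * D (0 + z₂) - ε * D (0 + z₂) < 0
      rw [hF2]; nlinarith

lemma sw_pos {D : ℝ → ℝ} (hDpos : ∀ y, 0 ≤ y → 0 < D y) (hW : ExtWeakOneSwitch D)
    {A : Finset ℝ} (hA : ∀ τ ∈ A, 0 ≤ τ) (c : ℝ → ℝ)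
    (z₁ z₂ σ : ℝ) (hz : 0 ≤ z₁) (h12 : z₁ < z₂) (h2σ : z₂ < σ)
    (hF1 : comboFn D A c z₁ = 0) (hF2 : comboFn D A c z₂ = 0) (hFσ : 0 < comboFn D A c σ)
    (u b : ℝ) (hu : 0 ≤ u) (hb : 0 ≤ b)
    (hcross : D (b + z₁) * D (u + z₂) < D (u + z₁) * D (b + z₂)) : False := by
  have hz2 : (0:ℝ) ≤ z₂ := by linarith
  have hσ0 : (0:ℝ) ≤ σ := by linarith
  have hb1 : 0 < D (b + z₁) := hDpos _ (by linarith)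
  have hb2 : 0 < D (b + z₂) := hDpos _ (by linarith)
  have hu1 : 0 < D (u + z₁) := hDpos _ (by linarith)
  have hu2 : 0 < D (u + z₂) := hDpos _ (by linarith)
  have hbσ : 0 < D (b + σ) := hDpos _ (by linarith)
  have huσ : 0 < D (u + σ) := hDpos _ (by linarith)
  set μ : ℝ := (D (u + z₁) / D (b + z₁) + D (u + z₂) / D (b + z₂)) / 2 with hμ
  have hrr : D (u + z₂) / D (b + z₂) < D (u + z₁) / D (b + z₁) := by
    rw [div_lt_div_iff₀ hb2 hb1]; nlinarith
  have hμ1 : μ < D (u + z₁) / D (b + z₁) := by rw [hμ]; linarith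
  have hμ2 : D (u + z₂) / D (b + z₂) < μ := by rw [hμ]; linarith
  have hμpos : 0 < μ := lt_trans (div_pos hu2 hb2) hμ2
  have hr1 : μ * D (b + z₁) < D (u + z₁) := (lt_div_iff₀ hb1).1 hμ1
  have hr2 : D (u + z₂) < μ * D (b + z₂) := (div_lt_iff₀ hb2).1 hμ2
  set P : ℝ := D (u + σ) + μ * D (b + σ) with hP
  have hPpos : 0 < P := by positivity
  set ε : ℝ := comboFn D A c σ / (2 * P) with hε
  have hεpos : 0 < ε := div_pos hFσ (by linarith)
  have hεP : ε * P = comboFn D A c σ / 2 := by rw [hε]; field_simp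
  refine no_ds_pert D hW A hA c hu hb ε (ε * μ)
    ⟨z₁, z₂, σ, hz, h12, h2σ, Or.inl ⟨?_, ?_, ?_⟩⟩
  · show 0 < comboFn D A c z₁ + ε * D (u + z₁) - ε * μ * D (b + z₁)
    rw [hF1]; nlinarith [mul_pos hεpos (sub_pos.2 hr1)]
  · show comboFn D A c z₂ + ε * D (u + z₂) - ε * μ * D (b + z₂) < 0
    rw [hF2]; nlinarith [mul_pos hεpos (sub_pos.2 hr2)]
  · show 0 < comboFn D A c σ + ε * D (u + σ) - ε * μ * D (b + σ)
    have h1 : ε * (μ * D (b + σ)) ≤ ε * P := by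
      apply mul_le_mul_of_nonneg_left _ (le_of_lt hεpos)
      rw [hP]; linarith
    nlinarith [mul_pos hεpos huσ]

lemma sw_neg {D : ℝ → ℝ} (hDpos : ∀ y, 0 ≤ y → 0 < D y) (hW : ExtWeakOneSwitch D)
    {A : Finset ℝ} (hA : ∀ τ ∈ A, 0 ≤ τ) (c : ℝ → ℝ)
    (z₁ z₂ σ : ℝ) (hσ0 : 0 ≤ σ) (hσ1 : σ < z₁) (h12 : z₁ < z₂)
    (hF1 : comboFn D A c z₁ = 0) (hF2 : comboFn D A c z₂ = 0) (hFσ : 0 < comboFn D A c σ)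
    (u b : ℝ) (hu : 0 ≤ u) (hb : 0 ≤ b)
    (hcross : D (b + z₁) * D (u + z₂) < D (u + z₁) * D (b + z₂)) : False := by
  have hz : (0:ℝ) ≤ z₁ := by linarith
  have hz2 : (0:ℝ) ≤ z₂ := by linarith
  have hb1 : 0 < D (b + z₁) := hDpos _ (by linarith)
  have hb2 : 0 < D (b + z₂) := hDpos _ (by linarith)
  have hu1 : 0 < D (u + z₁) := hDpos _ (by linarith)
  have hu2 : 0 < D (u + z₂) := hDpos _ (by linarith)
  have hbσ : 0 < D (b + σ) := hDpos _ (by linarith)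
  have huσ : 0 < D (u + σ) := hDpos _ (by linarith)
  set μ : ℝ := (D (u + z₁) / D (b + z₁) + D (u + z₂) / D (b + z₂)) / 2 with hμ
  have hrr : D (u + z₂) / D (b + z₂) < D (u + z₁) / D (b + z₁) := by
    rw [div_lt_div_iff₀ hb2 hb1]; nlinarith
  have hμ1 : μ < D (u + z₁) / D (b + z₁) := by rw [hμ]; linarith
  have hμ2 : D (u + z₂) / D (b + z₂) < μ := by rw [hμ]; linarith
  have hμpos : 0 < μ := lt_trans (div_pos hu2 hb2) hμ2
  have hr1 : μ * D (b + z₁) < D (u + z₁) := (lt_div_iff₀ hb1).1 hμ1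
  have hr2 : D (u + z₂) < μ * D (b + z₂) := (div_lt_iff₀ hb2).1 hμ2
  set P : ℝ := D (u + σ) + μ * D (b + σ) with hP
  have hPpos : 0 < P := by positivity
  set ε : ℝ := comboFn D A c σ / (2 * P) with hε
  have hεpos : 0 < ε := div_pos hFσ (by linarith)
  have hεP : ε * P = comboFn D A c σ / 2 := by rw [hε]; field_simp
  refine no_ds_pert D hW A hA c hb hu (ε * μ) ε
    ⟨σ, z₁, z₂, hσ0, hσ1, h12, Or.inl ⟨?_, ?_, ?_⟩⟩
  · show 0 < comboFn D A c σ + ε * μ * D (b + σ) - ε * D (u + σ)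
    have h1 : ε * D (u + σ) ≤ ε * P := by
      apply mul_le_mul_of_nonneg_left _ (le_of_lt hεpos)
      rw [hP]; nlinarith
    nlinarith [mul_pos (mul_pos hεpos hμpos) hbσ]
  · show comboFn D A c z₁ + ε * μ * D (b + z₁) - ε * D (u + z₁) < 0
    rw [hF1]; nlinarith [mul_pos hεpos (sub_pos.2 hr1)]
  · show 0 < comboFn D A c z₂ + ε * μ * D (b + z₂) - ε * D (u + z₂)
    rw [hF2]; nlinarith [mul_pos hεpos (sub_pos.2 hr2)]

lemma tail_zero {D : ℝ → ℝ} (hDpos : ∀ y, 0 ≤ y → 0 < D y)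
    {A : Finset ℝ} (hA : ∀ τ ∈ A, 0 ≤ τ) (c : ℝ → ℝ)
    (σ₁ σ₂ : ℝ) (h1 : 0 ≤ σ₁) (h12 : σ₁ < σ₂)
    (hmid : ∀ y, σ₁ ≤ y → y ≤ σ₂ → comboFn D A c y = 0)
    (hE : ∀ a, 0 ≤ a → D (a + σ₁) * D σ₂ = D (a + σ₂) * D σ₁) :
    ∀ y, σ₁ ≤ y → comboFn D A c y = 0 := by
  have hD1 : 0 < D σ₁ := hDpos _ h1
  have hrel : ∀ x, 0 ≤ x →
      comboFn D A c (σ₁ + x) * D σ₂ = comboFn D A c (σ₂ + x) * D σ₁ := by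
    intro x hx
    rw [comboFn, comboFn, Finset.sum_mul, Finset.sum_mul]
    refine Finset.sum_congr rfl (fun τ hτ => ?_)
    have hτ0 : 0 ≤ τ := hA τ hτ
    have h := hE (τ + x) (by linarith)
    have e1 : τ + x + σ₁ = τ + (σ₁ + x) := by ring
    have e2 : τ + x + σ₂ = τ + (σ₂ + x) := by ring
    rw [e1, e2] at h
    linear_combination c τ * h
  have hzero : ∀ k : ℕ, ∀ y, σ₁ ≤ y → y ≤ σ₂ + k * (σ₂ - σ₁) → comboFn D A c y = 0 := by
    intro k
    induction k with
    | zero => intro y hy1 hy2; exact hmid y hy1 (by push_cast at hy2; linarith)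
    | succ k ih =>
      intro y hy1 hy2
      by_cases hc : y ≤ σ₂ + k * (σ₂ - σ₁)
      · exact ih y hy1 hc
      · push_neg at hc
        have hk0 : (0:ℝ) ≤ (k:ℝ) := Nat.cast_nonneg k
        have hy2' : y ≥ σ₂ := by nlinarith
        have h := hrel (y - σ₂) (by linarith)
        have e : σ₂ + (y - σ₂) = y := by ring
        rw [e] at h
        have hprev : comboFn D A c (σ₁ + (y - σ₂)) = 0 := by
          apply ih _ (by linarith)
          push_cast at hy2
          linarith
        rw [hprev] at h
        have : comboFn D A c y * D σ₁ = 0 := by linarith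
        rcases mul_eq_zero.1 this with h' | h'
        · exact h'
        · exact absurd h' (ne_of_gt hD1)
  intro y hy
  obtain ⟨k, hk⟩ := exists_nat_ge ((y - σ₂) / (σ₂ - σ₁))
  refine hzero k y hy ?_
  have := (div_le_iff₀ (by linarith : (0:ℝ) < σ₂ - σ₁)).1 hk
  linarith

noncomputable def gam (D : ℝ → ℝ) (σ₁ : ℝ) : ℝ → ℝ :=
  fun τ => if τ ≤ σ₁ then D σ₁ / D (2*σ₁ - τ) else D τ / D σ₁

noncomputable def Ehead (D : ℝ → ℝ) (σ₁ : ℝ) : ℝ → ℝ :=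
  fun y => D y - gam D σ₁ y * D σ₁

section EheadLemmas

variable {D : ℝ → ℝ} {σ₁ : ℝ}

lemma gam_pos (hDpos : ∀ y, 0 ≤ y → 0 < D y) (h1 : 0 ≤ σ₁) :
    ∀ τ, 0 ≤ τ → 0 < gam D σ₁ τ := by
  intro τ hτ
  rw [gam]
  split_ifs with h
  · exact div_pos (hDpos _ h1) (hDpos _ (by linarith))
  · exact div_pos (hDpos _ hτ) (hDpos _ h1)

lemma Ehead_tail (hDpos : ∀ y, 0 ≤ y → 0 < D y) (h1 : 0 ≤ σ₁) :
    ∀ y, σ₁ ≤ y → Ehead D σ₁ y = 0 := by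
  intro y hy
  have hD1 : D σ₁ ≠ 0 := ne_of_gt (hDpos _ h1)
  rw [Ehead, gam]
  split_ifs with h
  · have hyy : y = σ₁ := le_antisymm h hy
    rw [hyy]
    have : 2*σ₁ - σ₁ = σ₁ := by ring
    rw [this]
    field_simp
    ring
  · have hDy : D y ≠ 0 := ne_of_gt (hDpos _ (by linarith))
    field_simp
    ring

lemma gam_shift (hDpos : ∀ y, 0 ≤ y → 0 < D y) (h1 : 0 ≤ σ₁)
    (hM : ∀ z, σ₁ ≤ z → ∀ a, 0 ≤ a → D (a + z) * D σ₁ = D (a + σ₁) * D z) :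
    ∀ τ, 0 ≤ τ → ∀ x, 0 ≤ x → gam D σ₁ (τ + x) * D σ₁ = gam D σ₁ τ * D (σ₁ + x) := by
  intro τ hτ x hx
  have hD1 : 0 < D σ₁ := hDpos _ h1
  rcases le_or_gt (τ + x) σ₁ with hc1 | hc1 <;> rcases le_or_gt τ σ₁ with hc2 | hc2
  · -- τ + x ≤ σ₁, τ ≤ σ₁
    have hden1 : 0 < D (2*σ₁ - (τ+x)) := hDpos _ (by linarith)
    have hden2 : 0 < D (2*σ₁ - τ) := hDpos _ (by linarith)
    have h := hM (2*σ₁ - τ - x) (by linarith) x hx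
    have e1 : x + (2*σ₁ - τ - x) = 2*σ₁ - τ := by ring
    have e2 : x + σ₁ = σ₁ + x := by ring
    rw [e1, e2] at h
    have e3 : 2*σ₁ - τ - x = 2*σ₁ - (τ + x) := by ring
    rw [e3] at h
    rw [gam, gam, if_pos hc1, if_pos hc2, div_mul_eq_mul_div, div_mul_eq_mul_div,
      div_eq_div_iff (ne_of_gt hden1) (ne_of_gt hden2)]
    linear_combination (D σ₁) * h
  · -- τ + x ≤ σ₁, τ > σ₁ : impossible
    linarith
  · -- τ + x > σ₁, τ ≤ σ₁
    have hden2 : 0 < D (2*σ₁ - τ) := hDpos _ (by linarith)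
    have hτx : 0 < D (τ + x) := hDpos _ (by linarith)
    have h := hM (τ + x) (by linarith) (σ₁ - τ) (by linarith)
    have e1 : σ₁ - τ + (τ + x) = σ₁ + x := by ring
    have e2 : σ₁ - τ + σ₁ = 2*σ₁ - τ := by ring
    rw [e1, e2] at h
    rw [gam, gam, if_neg (not_le.2 hc1), if_pos hc2,
      div_mul_cancel₀ _ (ne_of_gt hD1), div_mul_eq_mul_div, eq_div_iff (ne_of_gt hden2)]
    linear_combination -h
  · -- τ + x > σ₁, τ > σ₁
    have hτ' : 0 < D τ := hDpos _ hτ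
    have h := hM τ (by linarith) x hx
    have e2 : x + σ₁ = σ₁ + x := by ring
    have e3 : x + τ = τ + x := by ring
    rw [e2, e3] at h
    rw [gam, gam, if_neg (not_le.2 hc1), if_neg (not_le.2 hc2),
      div_mul_cancel₀ _ (ne_of_gt hD1), div_mul_eq_mul_div, eq_div_iff (ne_of_gt hD1)]
    linear_combination h

lemma Ehead_shift (hDpos : ∀ y, 0 ≤ y → 0 < D y) (h1 : 0 ≤ σ₁)
    (hM : ∀ z, σ₁ ≤ z → ∀ a, 0 ≤ a → D (a + z) * D σ₁ = D (a + σ₁) * D z) :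
    ∀ τ, 0 ≤ τ → ∀ x, 0 ≤ x →
      Ehead D σ₁ (τ + x) = D (τ + x) - gam D σ₁ τ * D (σ₁ + x) := by
  intro τ hτ x hx
  rw [Ehead, gam_shift hDpos h1 hM τ hτ x hx]

end EheadLemmas

lemma div_two_mul_cancel (N d : ℝ) (hd : d ≠ 0) : N / (2 * d) * d = N / 2 := by
  field_simp

lemma F_decomp {D : ℝ → ℝ} (hDpos : ∀ y, 0 ≤ y → 0 < D y) {σ₁ : ℝ} (h1 : 0 ≤ σ₁)
    (hM : ∀ z, σ₁ ≤ z → ∀ a, 0 ≤ a → D (a + z) * D σ₁ = D (a + σ₁) * D z)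
    {A : Finset ℝ} (hA : ∀ τ ∈ A, 0 ≤ τ) (c : ℝ → ℝ)
    (hz : comboFn D A c σ₁ = 0) :
    ∀ x, 0 ≤ x → comboFn D A c x = ∑ τ ∈ A, c τ * Ehead D σ₁ (τ + x) := by
  have hsplit : ∀ x, 0 ≤ x → comboFn D A c x =
      (∑ τ ∈ A, c τ * Ehead D σ₁ (τ + x)) + (∑ τ ∈ A, c τ * gam D σ₁ τ) * D (σ₁ + x) := by
    intro x hx
    rw [comboFn, Finset.sum_mul, ← Finset.sum_add_distrib]
    refine Finset.sum_congr rfl (fun τ hτ => ?_)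
    rw [Ehead_shift hDpos h1 hM τ (hA τ hτ) x hx]
    ring
  have hzero1 : ∑ τ ∈ A, c τ * Ehead D σ₁ (τ + σ₁) = 0 := by
    refine Finset.sum_eq_zero (fun τ hτ => ?_)
    rw [Ehead_tail hDpos h1 _ (by have := hA τ hτ; linarith)]
    ring
  have hΓ : (∑ τ ∈ A, c τ * gam D σ₁ τ) = 0 := by
    have h := hsplit σ₁ h1
    rw [hz, hzero1, zero_add] at h
    have hD2 : 0 < D (σ₁ + σ₁) := hDpos _ (by linarith)
    rcases mul_eq_zero.1 h.symm with h' | h'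
    · exact h'
    · exact absurd h' (ne_of_gt hD2)
  intro x hx
  rw [hsplit x hx, hΓ, zero_mul, add_zero]

lemma sign_const {D : ℝ → ℝ} (hDpos : ∀ y, 0 ≤ y → 0 < D y) (hW : ExtWeakOneSwitch D)
    {σ₁ : ℝ} (h1 : 0 ≤ σ₁)
    (hM : ∀ z, σ₁ ≤ z → ∀ a, 0 ≤ a → D (a + z) * D σ₁ = D (a + σ₁) * D z)
    (α β : ℝ) (hα0 : 0 ≤ α) (hβ0 : 0 ≤ β)
    (hEα : 0 < Ehead D σ₁ α) (hEβ : Ehead D σ₁ β < 0) : False := by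
  classical
  have hασ : α < σ₁ := by
    by_contra h
    rw [Ehead_tail hDpos h1 α (by linarith)] at hEα
    linarith
  have hβσ : β < σ₁ := by
    by_contra h
    rw [Ehead_tail hDpos h1 β (by linarith)] at hEβ
    linarith
  have hpair : ∀ γ₀ : ℝ, γ₀ ≠ σ₁ → 0 ≤ γ₀ → ∀ x, 0 ≤ x →
      comboFn D ({γ₀, σ₁} : Finset ℝ)
        (fun τ => if τ = γ₀ then 1 else -(gam D σ₁ γ₀)) x = Ehead D σ₁ (γ₀ + x) := by
    intro γ₀ hne hγ0 x hx
    rw [comboFn, Finset.sum_pair hne, if_pos rfl, if_neg (Ne.symm hne),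
      Ehead_shift hDpos h1 hM γ₀ hγ0 x hx]
    ring
  rcases lt_trichotomy α β with hαβ | hαβ | hαβ
  · -- α < β : pattern (+,-,+) with G = E(α+·) + ε D
    have hd : 0 < D (0 + (β - α)) := hDpos _ (by linarith)
    set ε : ℝ := (-(Ehead D σ₁ β)) / (2 * D (0 + (β - α))) with hε
    have hεpos : 0 < ε := div_pos (by linarith) (by linarith)
    have hεd : ε * D (0 + (β - α)) = (-(Ehead D σ₁ β)) / 2 := by
      rw [hε]; exact div_two_mul_cancel _ _ (ne_of_gt hd)
    refine no_ds_pert D hW ({α, σ₁} : Finset ℝ)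
      (by intro τ hτ; rcases Finset.mem_insert.1 hτ with h | h
          · exact h ▸ hα0
          · rw [Finset.mem_singleton.1 h]; exact h1)
      (fun τ => if τ = α then 1 else -(gam D σ₁ α))
      (le_refl 0) (le_refl 0) ε 0
      ⟨0, β - α, σ₁ + 1, le_refl 0, by linarith, by linarith, Or.inl ⟨?_, ?_, ?_⟩⟩
    · show 0 < comboFn D _ _ 0 + ε * D (0 + 0) - 0 * D (0 + 0)
      rw [hpair α (ne_of_lt hασ) hα0 0 (le_refl 0), add_zero]
      have : 0 < D (0 + 0) := hDpos _ (by linarith)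
      nlinarith
    · show comboFn D _ _ (β - α) + ε * D (0 + (β - α)) - 0 * D (0 + (β - α)) < 0
      rw [hpair α (ne_of_lt hασ) hα0 (β - α) (by linarith)]
      have e : α + (β - α) = β := by ring
      rw [e, hεd]
      linarith
    · show 0 < comboFn D _ _ (σ₁ + 1) + ε * D (0 + (σ₁ + 1)) - 0 * D (0 + (σ₁ + 1))
      rw [hpair α (ne_of_lt hασ) hα0 (σ₁ + 1) (by linarith)]
      rw [Ehead_tail hDpos h1 _ (by linarith)]
      have : 0 < D (0 + (σ₁ + 1)) := hDpos _ (by linarith)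
      nlinarith
  · rw [hαβ] at hEα; linarith
  · -- β < α : pattern (-,+,-) with G = E(β+·) - ε D
    have hd : 0 < D (0 + (α - β)) := hDpos _ (by linarith)
    set ε : ℝ := (Ehead D σ₁ α) / (2 * D (0 + (α - β))) with hε
    have hεpos : 0 < ε := div_pos (by linarith) (by linarith)
    have hεd : ε * D (0 + (α - β)) = (Ehead D σ₁ α) / 2 := by
      rw [hε]; exact div_two_mul_cancel _ _ (ne_of_gt hd)
    refine no_ds_pert D hW ({β, σ₁} : Finset ℝ)
      (by intro τ hτ; rcases Finset.mem_insert.1 hτ with h | h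
          · exact h ▸ hβ0
          · rw [Finset.mem_singleton.1 h]; exact h1)
      (fun τ => if τ = β then 1 else -(gam D σ₁ β))
      (le_refl 0) (le_refl 0) 0 ε
      ⟨0, α - β, σ₁ + 1, le_refl 0, by linarith, by linarith, Or.inr ⟨?_, ?_, ?_⟩⟩
    · show comboFn D _ _ 0 + 0 * D (0 + 0) - ε * D (0 + 0) < 0
      rw [hpair β (ne_of_lt hβσ) hβ0 0 (le_refl 0), add_zero]
      have : 0 < D (0 + 0) := hDpos _ (by linarith)
      nlinarith
    · show 0 < comboFn D _ _ (α - β) + 0 * D (0 + (α - β)) - ε * D (0 + (α - β))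
      rw [hpair β (ne_of_lt hβσ) hβ0 (α - β) (by linarith)]
      have e : β + (α - β) = α := by ring
      rw [e, hεd]
      linarith
    · show comboFn D _ _ (σ₁ + 1) + 0 * D (0 + (σ₁ + 1)) - ε * D (0 + (σ₁ + 1)) < 0
      rw [hpair β (ne_of_lt hβσ) hβ0 (σ₁ + 1) (by linarith)]
      rw [Ehead_tail hDpos h1 _ (by linarith)]
      have : 0 < D (0 + (σ₁ + 1)) := hDpos _ (by linarith)
      nlinarith

lemma Ehead_contOn {D : ℝ → ℝ} (hDpos : ∀ y, 0 ≤ y → 0 < D y)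
    (hcont : ContinuousOn D (Set.Ici 0)) {σ₁ : ℝ} (h1 : 0 ≤ σ₁) :
    ContinuousOn (Ehead D σ₁) (Set.Icc 0 σ₁) := by
  have hmaps : ∀ y ∈ Set.Icc (0:ℝ) σ₁, (2*σ₁ - y) ∈ Set.Ici (0:ℝ) := by
    intro y hy
    simp only [Set.mem_Icc] at hy
    simp only [Set.mem_Ici]
    linarith
  have hc2 : ContinuousOn (fun y => D (2*σ₁ - y)) (Set.Icc 0 σ₁) :=
    hcont.comp ((continuous_const.sub continuous_id).continuousOn) hmaps
  have hne : ∀ y ∈ Set.Icc (0:ℝ) σ₁, D (2*σ₁ - y) ≠ 0 := by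
    intro y hy
    simp only [Set.mem_Icc] at hy
    exact ne_of_gt (hDpos _ (by linarith))
  have hcD : ContinuousOn D (Set.Icc 0 σ₁) := hcont.mono (Set.Icc_subset_Ici_self)
  have : ContinuousOn (fun y => D y - (D σ₁ / D (2*σ₁ - y)) * D σ₁) (Set.Icc 0 σ₁) :=
    hcD.sub (((continuousOn_const.div hc2 hne)).mul continuousOn_const)
  refine this.congr (fun y hy => ?_)
  simp only [Set.mem_Icc] at hy
  rw [Ehead, gam, if_pos hy.2]

set_option maxHeartbeats 1000000 in
lemma head_vanish {D : ℝ → ℝ} (hDpos : ∀ y, 0 ≤ y → 0 < D y)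
    (hcont : ContinuousOn D (Set.Ici 0)) (hW : ExtWeakOneSwitch D)
    {σ₁ : ℝ} (h1 : 0 < σ₁)
    (hM : ∀ z, σ₁ ≤ z → ∀ a, 0 ≤ a → D (a + z) * D σ₁ = D (a + σ₁) * D z) :
    ∀ y, 0 ≤ y → Ehead D σ₁ y = 0 := by
  classical
  by_contra hcon
  push_neg at hcon
  obtain ⟨y₀, hy₀0, hy₀⟩ := hcon
  have h1' : (0:ℝ) ≤ σ₁ := le_of_lt h1
  -- choose the sign s so that s * Ehead is nonnegative and positive somewhere
  obtain ⟨st, hst, hnn, hy₀p⟩ :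
      ∃ st : ℝ, (st = 1 ∨ st = -1) ∧ (∀ y, 0 ≤ y → 0 ≤ st * Ehead D σ₁ y) ∧
        0 < st * Ehead D σ₁ y₀ := by
    rcases lt_or_gt_of_ne hy₀ with hneg | hpos
    · refine ⟨-1, Or.inr rfl, fun y hy => ?_, by nlinarith⟩
      by_contra hy'
      push_neg at hy'
      exact sign_const hDpos hW h1' hM y y₀ hy hy₀0 (by nlinarith) hneg
    · refine ⟨1, Or.inl rfl, fun y hy => ?_, by nlinarith⟩
      by_contra hy'
      push_neg at hy'
      exact sign_const hDpos hW h1' hM y₀ y hy₀0 hy hpos (by nlinarith)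
  set Et : ℝ → ℝ := fun y => st * Ehead D σ₁ y with hEt
  have hEtcont : ContinuousOn Et (Set.Icc 0 σ₁) :=
    continuousOn_const.mul (Ehead_contOn hDpos hcont h1')
  have hEttail : ∀ y, σ₁ ≤ y → Et y = 0 := by
    intro y hy
    rw [hEt]
    simp only [Ehead_tail hDpos h1' y hy, mul_zero]
  have hy₀σ : y₀ < σ₁ := by
    by_contra h
    push_neg at h
    have h0 := hEttail y₀ h
    simp only [hEt] at h0
    linarith
  set S : Set ℝ := {y | y ∈ Set.Icc 0 σ₁ ∧ 0 < Et y} with hS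
  have hSne : S.Nonempty := ⟨y₀, ⟨⟨hy₀0, le_of_lt hy₀σ⟩, hy₀p⟩⟩
  have hSbdd : BddAbove S := ⟨σ₁, fun y hy => hy.1.2⟩
  set u : ℝ := sSup S with hu
  have hu_le : u ≤ σ₁ := csSup_le hSne (fun y hy => hy.1.2)
  have hu_ge : y₀ ≤ u := le_csSup hSbdd ⟨⟨hy₀0, le_of_lt hy₀σ⟩, hy₀p⟩
  have hu0 : 0 ≤ u := le_trans hy₀0 hu_ge
  have hEzero : ∀ y, 0 ≤ y → u < y → Et y = 0 := by
    intro y hy0 huy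
    rcases le_or_gt y σ₁ with hyσ | hyσ
    · by_contra hne
      have : 0 < Et y := lt_of_le_of_ne (hnn y hy0) (Ne.symm hne)
      have : y ∈ S := ⟨⟨hy0, hyσ⟩, this⟩
      have : y ≤ u := le_csSup hSbdd this
      linarith
    · exact hEttail y (le_of_lt hyσ)
  have P2 : ∀ ℓ, 0 ≤ ℓ → ℓ < u → ∃ y, ℓ < y ∧ y < u ∧ 0 < Et y := by
    intro ℓ hℓ0 hℓu
    obtain ⟨y', hy'S, hy'ℓ⟩ := exists_lt_of_lt_csSup hSne hℓu
    have hy'u : y' ≤ u := le_csSup hSbdd hy'S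
    rcases lt_or_eq_of_le hy'u with h | h
    · exact ⟨y', hy'ℓ, h, hy'S.2⟩
    · -- y' = u, use continuity at u
      have hEtu : 0 < Et u := h ▸ hy'S.2
      have huIcc : u ∈ Set.Icc (0:ℝ) σ₁ := ⟨hu0, hu_le⟩
      have hcw : ContinuousWithinAt Et (Set.Icc 0 σ₁) u := hEtcont u huIcc
      rw [Metric.continuousWithinAt_iff] at hcw
      obtain ⟨δ, hδ0, hδ⟩ := hcw (Et u) hEtu
      set y : ℝ := (max ℓ (u - δ) + u) / 2 with hy
      have hmax : max ℓ (u - δ) < u := max_lt hℓu (by linarith)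
      have hyℓ : ℓ < y := by
        have : ℓ ≤ max ℓ (u - δ) := le_max_left _ _
        rw [hy]; nlinarith [le_max_left ℓ (u - δ)]
      have hyu : y < u := by rw [hy]; linarith
      have hy0 : 0 ≤ y := by linarith
      have hyIcc : y ∈ Set.Icc (0:ℝ) σ₁ := ⟨hy0, by linarith⟩
      have hdist : dist y u < δ := by
        rw [Real.dist_eq, abs_of_nonpos (by linarith : y - u ≤ 0)]
        have : u - δ ≤ max ℓ (u - δ) := le_max_right _ _
        rw [hy]; linarith
      have := hδ hyIcc hdist
      rw [Real.dist_eq] at this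
      have : |Et y - Et u| < Et u := this
      have h2 := abs_lt.1 this
      exact ⟨y, hyℓ, hyu, by linarith [h2.1]⟩
  have hupos : 0 < u := by
    rcases lt_or_eq_of_le hu0 with h | h
    · exact h
    · -- u = 0 : Et 0 > 0 and Et vanishes for y > 0, contradict continuity
      exfalso
      have hy₀u : y₀ = 0 := le_antisymm (by linarith) hy₀0
      have hEt0 : 0 < Et 0 := hy₀u ▸ hy₀p
      have h0Icc : (0:ℝ) ∈ Set.Icc (0:ℝ) σ₁ := ⟨le_refl 0, h1'⟩
      have hcw : ContinuousWithinAt Et (Set.Icc 0 σ₁) 0 := hEtcont 0 h0Icc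
      rw [Metric.continuousWithinAt_iff] at hcw
      obtain ⟨δ, hδ0, hδ⟩ := hcw (Et 0) hEt0
      set y : ℝ := min (δ/2) σ₁ with hy
      have hy0 : 0 < y := by rw [hy]; exact lt_min (by linarith) h1
      have hyIcc : y ∈ Set.Icc (0:ℝ) σ₁ := ⟨le_of_lt hy0, min_le_right _ _⟩
      have hdist : dist y 0 < δ := by
        rw [Real.dist_eq, sub_zero, abs_of_pos hy0]
        have : y ≤ δ/2 := min_le_left _ _
        linarith
      have h2 := abs_lt.1 (Real.dist_eq _ _ ▸ hδ hyIcc hdist)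
      have hEty : 0 < Et y := by linarith [h2.1]
      have : Et y = 0 := hEzero y (le_of_lt hy0) (by rw [← h]; exact hy0)
      linarith
  -- pick the points of the bump construction
  obtain ⟨p, hp0, hpu, hEp⟩ := P2 0 (le_refl 0) hupos
  set q : ℝ := p / 2 with hq
  have hq0 : 0 < q := by rw [hq]; linarith
  have hqp : q < p := by rw [hq]; linarith
  obtain ⟨y, hy1, hy2, hEy⟩ := P2 (q + u - p) (by linarith) (by linarith)
  set x₂ : ℝ := y - q with hx₂
  have hx₂0 : 0 < x₂ := by rw [hx₂]; linarith
  obtain ⟨x₃, h31, h32, hEx₃⟩ := P2 (u - q) (by linarith) (by linarith)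
  have hx₂₃ : x₂ < x₃ := by rw [hx₂]; linarith
  have hpσ : p < σ₁ := lt_of_lt_of_le hpu hu_le
  have hqσ : q < σ₁ := by linarith
  -- coefficients
  have hEq0 : 0 ≤ Et q := hnn q (le_of_lt hq0)
  have hEx₂0 : 0 ≤ Et x₂ := hnn x₂ (le_of_lt hx₂0)
  have hE00 : 0 ≤ Et 0 := hnn 0 (le_refl 0)
  set lam : ℝ := Et p / (Et q + Et p) with hlam
  have hlampos : 0 < lam := div_pos hEp (by linarith)
  have hlamq : lam * Et q < Et p := by
    rw [hlam, div_mul_eq_mul_div, div_lt_iff₀ (by linarith)]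
    nlinarith
  set nu : ℝ := lam * Et y / (2 * (Et x₂ + 1)) with hnu
  have hnupos : 0 < nu := div_pos (mul_pos hlampos hEy) (by linarith)
  have hnux₂ : nu * Et x₂ ≤ lam * Et y / 2 := by
    rw [hnu, div_mul_eq_mul_div, div_le_div_iff₀ (by linarith) (by linarith)]
    nlinarith [mul_pos hlampos hEy]
  -- the combination as a comboFn
  set A4 : Finset ℝ := insert 0 (insert q (insert p ({σ₁} : Finset ℝ))) with hA4
  set c4 : ℝ → ℝ := fun τ =>
    if τ = 0 then st * nu else if τ = q then -(st * lam) else if τ = p then st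
    else st * (lam * gam D σ₁ q - gam D σ₁ p - nu * gam D σ₁ 0) with hc4
  have hA4nn : ∀ τ ∈ A4, (0:ℝ) ≤ τ := by
    intro τ hτ
    simp only [hA4, Finset.mem_insert, Finset.mem_singleton] at hτ
    rcases hτ with rfl | rfl | rfl | rfl
    · exact le_refl 0
    · exact le_of_lt hq0
    · exact le_of_lt hp0
    · exact h1'
  have hGeq : ∀ x, 0 ≤ x → comboFn D A4 c4 x =
      Et (p + x) - lam * Et (q + x) + nu * Et (0 + x) := by
    intro x hx
    have h0q : (0:ℝ) ≠ q := ne_of_lt hq0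
    have h0p : (0:ℝ) ≠ p := ne_of_lt hp0
    have h0σ : (0:ℝ) ≠ σ₁ := ne_of_lt h1
    have hqp' : q ≠ p := ne_of_lt hqp
    have hqσ' : q ≠ σ₁ := ne_of_lt hqσ
    have hpσ' : p ≠ σ₁ := ne_of_lt hpσ
    have hm0 : (0:ℝ) ∉ insert q (insert p ({σ₁} : Finset ℝ)) := by
      simp [h0q, h0p, h0σ]
    have hmq : q ∉ insert p ({σ₁} : Finset ℝ) := by simp [hqp', hqσ']
    have hmp : p ∉ ({σ₁} : Finset ℝ) := by simp [hpσ']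
    rw [comboFn, hA4, Finset.sum_insert hm0, Finset.sum_insert hmq,
      Finset.sum_insert hmp, Finset.sum_singleton]
    have e0 : c4 0 = st * nu := by simp [hc4]
    have eq' : c4 q = -(st * lam) := by simp [hc4, hq0.ne']
    have ep : c4 p = st := by simp [hc4, hp0.ne', Ne.symm hqp']
    have eσ : c4 σ₁ = st * (lam * gam D σ₁ q - gam D σ₁ p - nu * gam D σ₁ 0) := by
      simp [hc4, h1.ne', Ne.symm hqσ', Ne.symm hpσ']
    rw [e0, eq', ep, eσ]
    have hsp := Ehead_shift hDpos h1' hM p (le_of_lt hp0) x hx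
    have hsq := Ehead_shift hDpos h1' hM q (le_of_lt hq0) x hx
    have hs0 := Ehead_shift hDpos h1' hM 0 (le_refl 0) x hx
    rw [hEt]
    simp only [hsp, hsq, hs0]
    ring
  -- evaluate and obtain a double switch
  refine combo_no_ds D hW A4 hA4nn c4 ⟨0, x₂, x₃, le_refl 0, hx₂0, hx₂₃, Or.inl ⟨?_, ?_, ?_⟩⟩
  · rw [hGeq 0 (le_refl 0)]
    have e1 : p + 0 = p := by ring
    have e2 : q + 0 = q := by ring
    have e3 : (0:ℝ) + 0 = 0 := by ring
    rw [e1, e2, e3]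
    linarith [hlamq, mul_nonneg (le_of_lt hnupos) hE00]
  · rw [hGeq x₂ (le_of_lt hx₂0)]
    have e1 : Et (p + x₂) = 0 := hEzero _ (by linarith) (by rw [hx₂]; linarith)
    have e2 : q + x₂ = y := by rw [hx₂]; ring
    rw [e1, e2, zero_add]
    have h7 : 0 < lam * Et y := mul_pos hlampos hEy
    linarith [hnux₂, h7]
  · rw [hGeq x₃ (by linarith)]
    have e1 : Et (p + x₃) = 0 := hEzero _ (by linarith) (by linarith)
    have e2 : Et (q + x₃) = 0 := hEzero _ (by linarith) (by linarith)
    have e3 : (0:ℝ) + x₃ = x₃ := by ring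
    rw [e1, e2, e3]
    have h5 : 0 < nu * Et x₃ := mul_pos hnupos hEx₃
    have h6 : lam * (0:ℝ) = 0 := by ring
    linarith [h5]

lemma key {D : ℝ → ℝ} (hDpos : ∀ y, 0 ≤ y → 0 < D y)
    (hcont : ContinuousOn D (Set.Ici 0)) (hW : ExtWeakOneSwitch D)
    {A : Finset ℝ} (hA : ∀ τ ∈ A, 0 ≤ τ) (c : ℝ → ℝ)
    (σ₁ σ₂ σ₃ : ℝ) (h1 : 0 ≤ σ₁) (h12 : σ₁ < σ₂) (hσ : 0 ≤ σ₃)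
    (hz1 : comboFn D A c σ₁ = 0) (hz2 : comboFn D A c σ₂ = 0)
    (hpos : 0 < comboFn D A c σ₃) : False := by
  classical
  have hmid : ∀ y, σ₁ ≤ y → y ≤ σ₂ → comboFn D A c y = 0 := by
    intro y hy1 hy2
    rcases eq_or_lt_of_le hy1 with h | h
    · rw [← h]; exact hz1
    · rcases eq_or_lt_of_le hy2 with h' | h'
      · rw [h']; exact hz2
      · exact middle_zero hDpos hW hA c σ₁ σ₂ y h1 h h' hz1 hz2
  have hout : σ₃ < σ₁ ∨ σ₂ < σ₃ := by
    by_contra h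
    push_neg at h
    rw [hmid σ₃ h.1 h.2] at hpos
    linarith
  by_cases hS : ∃ a, 0 ≤ a ∧ D (a + σ₁) * D σ₂ ≠ D (a + σ₂) * D σ₁
  · obtain ⟨a, ha0, hane⟩ := hS
    rcases lt_or_gt_of_ne hane with hlt | hgt
    · have hcross : D (a + σ₁) * D (0 + σ₂) < D (0 + σ₁) * D (a + σ₂) := by
        rw [zero_add, zero_add]; linarith
      rcases hout with hc | hc
      · exact sw_neg hDpos hW hA c σ₁ σ₂ σ₃ hσ hc h12 hz1 hz2 hpos 0 a (le_refl 0) ha0 hcross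
      · exact sw_pos hDpos hW hA c σ₁ σ₂ σ₃ h1 h12 hc hz1 hz2 hpos 0 a (le_refl 0) ha0 hcross
    · have hcross : D (0 + σ₁) * D (a + σ₂) < D (a + σ₁) * D (0 + σ₂) := by
        rw [zero_add, zero_add]; linarith
      rcases hout with hc | hc
      · exact sw_neg hDpos hW hA c σ₁ σ₂ σ₃ hσ hc h12 hz1 hz2 hpos a 0 ha0 (le_refl 0) hcross
      · exact sw_pos hDpos hW hA c σ₁ σ₂ σ₃ h1 h12 hc hz1 hz2 hpos a 0 ha0 (le_refl 0) hcross
  · push_neg at hS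
    have htail : ∀ y, σ₁ ≤ y → comboFn D A c y = 0 :=
      tail_zero hDpos hA c σ₁ σ₂ h1 h12 hmid (fun a ha => hS a ha)
    have hσ₃1 : σ₃ < σ₁ := by
      by_contra h
      push_neg at h
      rw [htail σ₃ h] at hpos
      linarith
    have h1pos : 0 < σ₁ := lt_of_le_of_lt hσ hσ₃1
    by_cases hS2 : ∃ z₁, σ₁ ≤ z₁ ∧ ∃ z₂, z₁ < z₂ ∧ ∃ a, 0 ≤ a ∧
        D (a + z₁) * D z₂ ≠ D (a + z₂) * D z₁
    · obtain ⟨z₁, hz1', z₂, h12', a, ha0, hane⟩ := hS2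
      have hFz1 : comboFn D A c z₁ = 0 := htail z₁ hz1'
      have hFz2 : comboFn D A c z₂ = 0 := htail z₂ (by linarith)
      have hσz : σ₃ < z₁ := lt_of_lt_of_le hσ₃1 hz1'
      rcases lt_or_gt_of_ne hane with hlt | hgt
      · have hcross : D (a + z₁) * D (0 + z₂) < D (0 + z₁) * D (a + z₂) := by
          rw [zero_add, zero_add]; linarith
        exact sw_neg hDpos hW hA c z₁ z₂ σ₃ hσ hσz h12' hFz1 hFz2 hpos 0 a (le_refl 0) ha0 hcross
      · have hcross : D (0 + z₁) * D (a + z₂) < D (a + z₁) * D (0 + z₂) := by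
          rw [zero_add, zero_add]; linarith
        exact sw_neg hDpos hW hA c z₁ z₂ σ₃ hσ hσz h12' hFz1 hFz2 hpos a 0 ha0 (le_refl 0) hcross
    · push_neg at hS2
      have hM : ∀ z, σ₁ ≤ z → ∀ a, 0 ≤ a → D (a + z) * D σ₁ = D (a + σ₁) * D z := by
        intro z hz a ha
        rcases eq_or_lt_of_le hz with h | h
        · rw [← h]
        · exact (hS2 σ₁ (le_refl σ₁) z h a ha).symm
      have hhv := head_vanish hDpos hcont hW h1pos hM
      have hdecomp := F_decomp hDpos (le_of_lt h1pos) hM hA c hz1 σ₃ hσ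
      rw [hdecomp] at hpos
      have hzero : ∑ τ ∈ A, c τ * Ehead D σ₁ (τ + σ₃) = 0 := by
        refine Finset.sum_eq_zero (fun τ hτ => ?_)
        rw [hhv (τ + σ₃) (by have := hA τ hτ; linarith)]
        ring
      rw [hzero] at hpos
      linarith

lemma combo_neg (D : ℝ → ℝ) (A : Finset ℝ) (c : ℝ → ℝ) (x : ℝ) :
    comboFn D A (fun τ => -(c τ)) x = -(comboFn D A c x) := by
  rw [comboFn, comboFn, ← Finset.sum_neg_distrib]
  exact Finset.sum_congr rfl (fun τ _ => by ring)

theorem weak_one_switch_two_zeros_everywhere_zero (D : ℝ → ℝ) (hD : IsDiscount D)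
    (hcont : ContinuousOn D (Set.Ici 0)) (hW : ExtWeakOneSwitch D)
    (n m : ℕ) (hn : 0 < n) (hm : 0 < m)
    (t : Fin n → ℝ) (s : Fin m → ℝ) (v : Fin n → ℝ) (w : Fin m → ℝ)
    (ht : StrictMono t) (hs : StrictMono s) (ht0 : ∀ i, 0 ≤ t i) (hs0 : ∀ j, 0 ≤ s j)
    (hv : ∀ i, 0 ≤ v i) (hw : ∀ j, 0 ≤ w j)
    (σ₁ σ₂ : ℝ) (h1 : 0 ≤ σ₁) (h12 : σ₁ < σ₂)
    (hz1 : diffFn D t s v w σ₁ = 0) (hz2 : diffFn D t s v w σ₂ = 0) :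
    ∀ σ, 0 ≤ σ → diffFn D t s v w σ = 0 := by
  obtain ⟨hD0, hDpos, hanti, htend⟩ := hD
  obtain ⟨A, c, hA, hcombo⟩ := diffFn_eq_combo D t s v w ht0 hs0
  rw [hcombo] at hz1 hz2 ⊢
  intro σ hσ
  by_contra hne
  rcases lt_or_gt_of_ne hne with hneg | hpos
  · refine key (fun y hy => hDpos y hy) hcont hW hA (fun τ => -(c τ)) σ₁ σ₂ σ h1 h12 hσ ?_ ?_ ?_
    · rw [combo_neg, hz1]; ring
    · rw [combo_neg, hz2]; ring
    · rw [combo_neg]; linarith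
  · exact key (fun y hy => hDpos y hy) hcont hW hA c σ₁ σ₂ σ h1 h12 hσ hz1 hz2 hpos
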